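/- The generating series O(x,t) = Σ_W x^{e(W)} t^{cl(W)}, summed over all rooted plane (ordered) trees W, where e(W) is the number of edges of W and cl(W) is the number of vertices of W having at least one child which is a leaf, satisfies the functional equation O = (1/(1 − x(O − 1))) · (1 + x·t·(1/(1 − x·O))) in ℚ[[x,t]], and moreover O(x,t) equals the series B(x,t) = Σ_T x^{|T|} t^{hook(T)} summed over all binary trees T. -/

import Mathlib

/-- Binary trees: `leaf` is the empty tree, `node l r` is a vertex with
left subtree `l` and right subtree `r`. -/
inductive BT : Type
  | leaf : BT
  | node : BT → BT → BT
  deriving DecidableEq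

/-- Number of vertices of a binary tree. -/
def BT.size : BT → ℕ
  | leaf => 0
  | node l r => 1 + l.size + r.size

mutual
  /-- The number of hooks in the hook partition of a binary tree: one hook for the
  root, plus the hooks of the trees hanging off the root's hook. -/
  def hookCount : BT → ℕ
    | .leaf => 0
    | .node l r => 1 + hookAuxL l + hookAuxR r
  /-- Total number of hooks of the right subtrees hanging off the leftmost branch. -/
  def hookAuxL : BT → ℕ
    | .leaf => 0
    | .node l r => hookCount r + hookAuxL l
  /-- Total number of hooks of the left subtrees hanging off the rightmost branch. -/
  def hookAuxR : BT → ℕ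
    | .leaf => 0
    | .node l r => hookCount l + hookAuxR r
end
/-- Rooted plane (ordered) trees: a root together with a (linearly ordered, possibly
empty) list of subtrees. -/
inductive PTree : Type
  | node : List PTree → PTree

/-- Number of edges of a rooted plane tree. -/
def PTree.edges : PTree → ℕ
  | .node ts => ts.length + (ts.attach.map (fun x => PTree.edges x.1)).sum
decreasing_by
  have := List.sizeOf_lt_of_mem x.2
  simp only [PTree.node.sizeOf_spec]
  omega

/-- Whether a rooted plane tree is a single vertex (a leaf). -/
def PTree.isLeaf : PTree → Bool
  | .node ts => ts.isEmpty

/-- The number of vertices of a rooted plane tree having at least one child which is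
a leaf. -/
def PTree.cl : PTree → ℕ
  | .node ts => (if ts.any PTree.isLeaf then 1 else 0) + (ts.attach.map (fun x => PTree.cl x.1)).sum
decreasing_by
  have := List.sizeOf_lt_of_mem x.2
  simp only [PTree.node.sizeOf_spec]
  omega

/-- The generating series `B(x,t) = ∑_T x^{|T|} t^{hook(T)}` over all binary trees,
in `ℚ[[x,t]]` with `x = X 0` and `t = X 1`. -/
noncomputable def Bser : MvPowerSeries (Fin 2) ℚ := fun d =>
  (Nat.card {T : BT // T.size = d 0 ∧ hookCount T = d 1} : ℚ)

/-- The generating series `O(x,t) = ∑_W x^{e(W)} t^{cl(W)}` over all rooted plane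
(ordered) trees, in `ℚ[[x,t]]` with `x = X 0` and `t = X 1`: the coefficient of
`xⁿ tᵏ` is the number of plane trees with `n` edges and `cl`-statistic `k`. -/
noncomputable def Oser : MvPowerSeries (Fin 2) ℚ := fun d =>
  (Nat.card {W : PTree // W.edges = d 0 ∧ W.cl = d 1} : ℚ)

/-! ### Generic generating-series machinery -/

open MvPowerSeries Finsupp

abbrev Ix := Fin 2 →₀ ℕ

noncomputable def ser {α : Type} (s : α → Ix) : MvPowerSeries (Fin 2) ℚ :=
  fun d => (Nat.card {a : α // s a = d} : ℚ)

lemma ser_coeff {α : Type} (s : α → Ix) (d : Ix) :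
    MvPowerSeries.coeff d (ser s) = (Nat.card {a : α // s a = d} : ℚ) := rfl

def FinStat {α : Type} (s : α → Ix) : Prop := ∀ d, {a : α | s a = d}.Finite

lemma FinStat.finite {α : Type} {s : α → Ix} (hs : FinStat s) (d : Ix) :
    Finite {a : α // s a = d} := (hs d).to_subtype

lemma ser_congr {α β : Type} {s : α → Ix} {s' : β → Ix} (e : α ≃ β)
    (h : ∀ a, s' (e a) = s a) : ser s = ser s' := by
  funext d
  have : Nat.card {a : α // s a = d} = Nat.card {b : β // s' b = d} :=
    Nat.card_congr (e.subtypeEquiv fun a => by simp [h a])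
  simp only [ser, this]

lemma FinStat.congr {α β : Type} {s : α → Ix} {s' : β → Ix} (e : α ≃ β)
    (h : ∀ a, s' (e a) = s a) (hs' : FinStat s') : FinStat s := by
  intro d
  have : {a : α | s a = d} = e ⁻¹' {b : β | s' b = d} := by
    ext a; simp [Set.mem_preimage, h a]
  rw [this]
  exact (hs' d).preimage (e.injective.injOn)

lemma ser_sumElim {α β : Type} {s : α → Ix} {s' : β → Ix} (hs : FinStat s) (hs' : FinStat s') :
    ser (Sum.elim s s') = ser s + ser s' := by
  funext d
  have e : {x : α ⊕ β // Sum.elim s s' x = d} ≃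
      {a : α // s a = d} ⊕ {b : β // s' b = d} := Equiv.subtypeSum
  have := hs.finite d
  have := hs'.finite d
  have : Nat.card {x : α ⊕ β // Sum.elim s s' x = d}
      = Nat.card {a : α // s a = d} + Nat.card {b : β // s' b = d} := by
    rw [Nat.card_congr e, Nat.card_sum]
  show ((Nat.card {x : α ⊕ β // Sum.elim s s' x = d} : ℕ) : ℚ) = _
  rw [this]
  push_cast
  rfl

lemma FinStat.sumElim {α β : Type} {s : α → Ix} {s' : β → Ix}
    (hs : FinStat s) (hs' : FinStat s') : FinStat (Sum.elim s s') := by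
  intro d
  have : {x : α ⊕ β | Sum.elim s s' x = d} =
      (Sum.inl '' {a | s a = d}) ∪ (Sum.inr '' {b | s' b = d}) := by
    ext x; cases x <;> simp
  rw [this]
  exact ((hs d).image _).union ((hs' d).image _)

lemma card_sigma_finset {ι : Type*} (s : Finset ι) (f : ι → Type*)
    (h : ∀ i : s, Finite (f i.1)) :
    Nat.card ((i : s) × f i.1) = ∑ i ∈ s, Nat.card (f i) := by
  haveI : ∀ i : s, Fintype (f i.1) := fun i => @Fintype.ofFinite _ (h i)
  rw [Nat.card_eq_fintype_card, Fintype.card_sigma]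
  rw [← Finset.sum_attach s (fun i => Nat.card (f i))]
  exact Finset.sum_congr rfl fun i _ => (Nat.card_eq_fintype_card).symm

def convEquiv {α β : Type} (s : α → Ix) (s' : β → Ix) (d : Ix) :
    {p : α × β // s p.1 + s' p.2 = d} ≃
      ((q : Finset.HasAntidiagonal.antidiagonal d) × ({a : α // s a = q.1.1} × {b : β // s' b = q.1.2})) where
  toFun p := ⟨⟨(s p.1.1, s' p.1.2), Finset.HasAntidiagonal.mem_antidiagonal.mpr p.2⟩,
    ⟨⟨p.1.1, rfl⟩, ⟨p.1.2, rfl⟩⟩⟩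
  invFun q := ⟨(q.2.1.1, q.2.2.1), by
    rw [q.2.1.2, q.2.2.2]; exact Finset.HasAntidiagonal.mem_antidiagonal.mp q.1.2⟩
  left_inv p := rfl
  right_inv := by
    rintro ⟨⟨⟨u, v⟩, hq⟩, ⟨⟨a, ha⟩, ⟨b, hb⟩⟩⟩
    have ha' : s a = u := ha
    have hb' : s' b = v := hb
    subst ha'; subst hb'
    rfl

lemma ser_mul {α β : Type} {s : α → Ix} {s' : β → Ix} (hs : FinStat s) (hs' : FinStat s') :
    ser s * ser s' = ser (fun p : α × β => s p.1 + s' p.2) := by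
  apply MvPowerSeries.ext
  intro d
  rw [MvPowerSeries.coeff_mul]
  have hfin : ∀ q : Finset.HasAntidiagonal.antidiagonal d,
      Finite ({a : α // s a = q.1.1} × {b : β // s' b = q.1.2}) := by
    intro q
    have := hs.finite q.1.1
    have := hs'.finite q.1.2
    infer_instance
  have hcard : Nat.card {p : α × β // s p.1 + s' p.2 = d}
      = ∑ q ∈ Finset.HasAntidiagonal.antidiagonal d,
          Nat.card ({a : α // s a = q.1} × {b : β // s' b = q.2}) := by
    rw [Nat.card_congr (convEquiv s s' d)]
    exact card_sigma_finset (Finset.HasAntidiagonal.antidiagonal d)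
      (fun q => ({a : α // s a = q.1} × {b : β // s' b = q.2})) hfin
  rw [ser_coeff]
  rw [hcard]
  push_cast [Nat.card_prod]
  rfl

lemma FinStat.mul {α β : Type} {s : α → Ix} {s' : β → Ix} (hs : FinStat s) (hs' : FinStat s') :
    FinStat (fun p : α × β => s p.1 + s' p.2) := by
  intro d
  rw [← Set.finite_coe_iff]
  have hfin : ∀ q : Finset.HasAntidiagonal.antidiagonal d,
      Finite ({a : α // s a = q.1.1} × {b : β // s' b = q.1.2}) := by
    intro q
    have := hs.finite q.1.1
    have := hs'.finite q.1.2
    infer_instance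
  exact Finite.of_equiv _ (convEquiv s s' d).symm

lemma FinStat.addConst {α : Type} {s : α → Ix} (hs : FinStat s) (c : Ix) :
    FinStat (fun a => c + s a) := by
  intro d
  exact (hs (d - c)).subset (fun a ha => by
    have h1 : c + s a = d := ha
    rw [add_comm] at h1
    exact eq_tsub_of_add_eq h1)

lemma FinStat.subtype {α : Type} {p : α → Prop} {s : α → Ix} (hs : FinStat s) :
    FinStat (fun x : Subtype p => s x.1) := by
  intro d
  have : {x : Subtype p | s x.1 = d} = Subtype.val ⁻¹' {a : α | s a = d} := rfl
  rw [this]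
  exact (hs d).preimage (Subtype.val_injective.injOn)

lemma ser_one : ser (fun _ : Unit => (0 : Ix)) = 1 := by
  apply MvPowerSeries.ext
  intro d
  rw [ser_coeff, MvPowerSeries.coeff_one]
  by_cases h : d = 0
  · subst h
    rw [if_pos rfl]
    have h1 : Nat.card {_a : Unit // (0 : Ix) = 0} = 1 := by
      rw [Nat.card_eq_one_iff_unique]
      exact ⟨⟨fun a b => Subtype.ext (Subsingleton.elim _ _)⟩, ⟨⟨Unit.unit, rfl⟩⟩⟩
    rw [h1]
    norm_num
  · rw [if_neg h]
    haveI : IsEmpty {_a : Unit // (0 : Ix) = d} := ⟨fun a => h (a.2.symm)⟩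
    rw [Nat.card_of_isEmpty]
    norm_num

lemma FinStat.const_unit (c : Ix) : FinStat (fun _ : Unit => c) := fun _ => Set.toFinite _

lemma ser_X_mul {α : Type} (s : α → Ix) (i : Fin 2) :
    MvPowerSeries.X i * ser s = ser (fun a => Finsupp.single i 1 + s a) := by
  apply MvPowerSeries.ext
  intro d
  rw [MvPowerSeries.X, MvPowerSeries.coeff_monomial_mul]
  by_cases h : Finsupp.single i 1 ≤ d
  · rw [if_pos h, one_mul, ser_coeff, ser_coeff]
    congr 1
    apply Nat.card_congr
    apply Equiv.subtypeEquivRight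
    intro a
    rw [eq_tsub_iff_add_eq_of_le h, add_comm]
  · rw [if_neg h, ser_coeff]
    haveI : IsEmpty {a : α // Finsupp.single i 1 + s a = d} :=
      ⟨fun a => h (a.2 ▸ le_add_right le_rfl)⟩
    rw [Nat.card_of_isEmpty]
    norm_num

/-! ### Basic facts about the statistics -/

lemma PTree.edges_node (ts : List PTree) :
    (PTree.node ts).edges = ts.length + (ts.map PTree.edges).sum := by
  rw [PTree.edges]
  congr 1
  rw [← List.attach_map_val (l := ts) (f := PTree.edges)]

lemma PTree.cl_node (ts : List PTree) :
    (PTree.node ts).cl = (if ts.any PTree.isLeaf then 1 else 0) + (ts.map PTree.cl).sum := by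
  rw [PTree.cl]
  congr 1
  rw [← List.attach_map_val (l := ts) (f := PTree.cl)]

lemma BT.finite_size_le (n : ℕ) : {T : BT | T.size ≤ n}.Finite := by
  induction n with
  | zero =>
    apply Set.Finite.subset (Set.finite_singleton BT.leaf)
    rintro (_ | ⟨l, r⟩) hT
    · exact rfl
    · simp only [Set.mem_setOf_eq, BT.size] at hT; omega
  | succ n ih =>
    apply Set.Finite.subset (((ih.prod ih).image (fun p => BT.node p.1 p.2)).insert BT.leaf)
    rintro (_ | ⟨l, r⟩) hT
    · exact Set.mem_insert _ _
    · apply Set.mem_insert_of_mem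
      refine ⟨(l, r), ⟨?_, ?_⟩, rfl⟩ <;>
        · simp only [Set.mem_setOf_eq, BT.size] at hT ⊢; omega

lemma List.finite_bounded {α : Type} {S : Set α} (hS : S.Finite) (n : ℕ) :
    {l : List α | l.length ≤ n ∧ ∀ x ∈ l, x ∈ S}.Finite := by
  haveI := hS.to_subtype
  apply Set.Finite.subset (((List.finite_length_le (↥S) n)).image (fun l => l.map Subtype.val))
  rintro l ⟨hlen, hmem⟩
  refine ⟨l.attach.map (fun x => ⟨x.1, hmem x.1 x.2⟩), ?_, ?_⟩
  · simp only [Set.mem_setOf_eq, List.length_map, List.length_attach]; exact hlen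
  · show List.map Subtype.val (List.map (fun x => (⟨x.1, hmem x.1 x.2⟩ : ↥S)) l.attach) = l
    rw [List.map_map]
    have := List.attach_map_val (l := l) (f := fun x => x)
    simpa using this

lemma PTree.finite_edges_le (n : ℕ) : {W : PTree | W.edges ≤ n}.Finite := by
  induction n with
  | zero =>
    apply Set.Finite.subset (Set.finite_singleton (PTree.node []))
    rintro ⟨ts⟩ hW
    rw [Set.mem_setOf_eq, PTree.edges_node] at hW
    have : ts = [] := by
      cases ts with
      | nil => rfl
      | cons a l => simp at hW
    rw [this]; rfl
  | succ n ih =>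
    apply Set.Finite.subset ((List.finite_bounded ih (n+1)).image PTree.node)
    rintro ⟨ts⟩ hW
    rw [Set.mem_setOf_eq, PTree.edges_node] at hW
    refine ⟨ts, ⟨by omega, fun w hw => ?_⟩, rfl⟩
    rw [Set.mem_setOf_eq]
    have h1 : w.edges ∈ ts.map PTree.edges := List.mem_map_of_mem hw
    have h2 : w.edges ≤ (ts.map PTree.edges).sum := List.le_sum_of_mem h1
    have h3 : 1 ≤ ts.length := by
      cases ts with
      | nil => simp at hw
      | cons a l => simp
    omega

/-! ### The statistics as `Ix`-valued maps -/

noncomputable def statB (T : BT) : Ix := Finsupp.single 0 T.size + Finsupp.single 1 (hookCount T)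
noncomputable def statLk (T : BT) : Ix := Finsupp.single 0 T.size + Finsupp.single 1 (hookAuxL T)
noncomputable def statRk (T : BT) : Ix := Finsupp.single 0 T.size + Finsupp.single 1 (hookAuxR T)
noncomputable def statO (W : PTree) : Ix := Finsupp.single 0 W.edges + Finsupp.single 1 W.cl
noncomputable def statO1 (W : PTree) : Ix :=
  Finsupp.single 0 (1 + W.edges) + Finsupp.single 1 W.cl
noncomputable def statList (l : List PTree) : Ix := (l.map statO1).sum

lemma pair_apply0 (a b : ℕ) : ((Finsupp.single (0 : Fin 2) a + Finsupp.single 1 b : Ix)) 0 = a := by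
  rw [Finsupp.add_apply, Finsupp.single_eq_same, Finsupp.single_eq_of_ne (by decide), add_zero]

lemma pair_apply1 (a b : ℕ) : ((Finsupp.single (0 : Fin 2) a + Finsupp.single 1 b : Ix)) 1 = b := by
  rw [Finsupp.add_apply, Finsupp.single_eq_same, Finsupp.single_eq_of_ne (by decide), zero_add]

lemma ix_ext {u v : Ix} (h0 : u 0 = v 0) (h1 : u 1 = v 1) : u = v := by
  apply Finsupp.ext
  intro i
  fin_cases i
  · exact h0
  · exact h1

lemma pair_eq_iff (a b : ℕ) (d : Ix) :
    (Finsupp.single (0 : Fin 2) a + Finsupp.single 1 b : Ix) = d ↔ a = d 0 ∧ b = d 1 := by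
  constructor
  · intro h
    exact ⟨by rw [← h, pair_apply0], by rw [← h, pair_apply1]⟩
  · rintro ⟨rfl, rfl⟩
    exact ix_ext (pair_apply0 _ _) (pair_apply1 _ _)

lemma statList_apply0 (l : List PTree) :
    statList l 0 = l.length + (l.map PTree.edges).sum := by
  induction l with
  | nil => simp [statList]
  | cons w l ih =>
    simp only [statList, List.map_cons, List.sum_cons, List.length_cons, Finsupp.add_apply] at *
    rw [ih]
    have : statO1 w 0 = 1 + w.edges := pair_apply0 _ _
    rw [this]
    ring

lemma statList_apply1 (l : List PTree) :
    statList l 1 = (l.map PTree.cl).sum := by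
  induction l with
  | nil => simp [statList]
  | cons w l ih =>
    simp only [statList, List.map_cons, List.sum_cons, Finsupp.add_apply] at *
    rw [ih]
    have : statO1 w 1 = w.cl := pair_apply1 _ _
    rw [this]

/-! ### Finiteness of the statistics -/

lemma finstat_of_size {f : BT → ℕ} : FinStat (fun T => Finsupp.single 0 T.size + Finsupp.single 1 (f T)) := by
  intro d
  apply (BT.finite_size_le (d 0)).subset
  intro T hT
  have := ((pair_eq_iff _ _ _).mp hT).1
  exact le_of_eq this

lemma finstatB : FinStat statB := finstat_of_size
lemma finstatLk : FinStat statLk := finstat_of_size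
lemma finstatRk : FinStat statRk := finstat_of_size

lemma finstatO : FinStat statO := by
  intro d
  apply (PTree.finite_edges_le (d 0)).subset
  intro W hW
  exact le_of_eq ((pair_eq_iff _ _ _).mp hW).1

lemma finstatList : FinStat statList := by
  intro d
  apply Set.Finite.subset (List.finite_bounded (PTree.finite_edges_le (d 0)) (d 0))
  intro l hl
  have h0 : statList l 0 = d 0 := by rw [hl]
  rw [statList_apply0] at h0
  constructor
  · omega
  · intro w hw
    have h1 : w.edges ∈ l.map PTree.edges := List.mem_map_of_mem hw
    have h2 : w.edges ≤ (l.map PTree.edges).sum := List.le_sum_of_mem h1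
    simp only [Set.mem_setOf_eq]
    omega

/-! ### Relating `Oser`, `Bser` to `ser` -/

lemma Oser_eq : Oser = ser statO := by
  funext d
  have : Nat.card {W : PTree // W.edges = d 0 ∧ W.cl = d 1} = Nat.card {W : PTree // statO W = d} := by
    apply Nat.card_congr
    apply Equiv.subtypeEquivRight
    intro W
    rw [statO, pair_eq_iff]
  simp only [Oser, ser, this]

lemma Bser_eq : Bser = ser statB := by
  funext d
  have : Nat.card {T : BT // T.size = d 0 ∧ hookCount T = d 1} = Nat.card {T : BT // statB T = d} := by
    apply Nat.card_congr
    apply Equiv.subtypeEquivRight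
    intro T
    rw [statB, pair_eq_iff]
  simp only [Bser, ser, this]

/-! ### Pointwise evaluation lemmas -/

lemma statB_apply0 (T : BT) : statB T 0 = T.size := by rw [statB]; exact pair_apply0 _ _
lemma statB_apply1 (T : BT) : statB T 1 = hookCount T := by rw [statB]; exact pair_apply1 _ _
lemma statLk_apply0 (T : BT) : statLk T 0 = T.size := by rw [statLk]; exact pair_apply0 _ _
lemma statLk_apply1 (T : BT) : statLk T 1 = hookAuxL T := by rw [statLk]; exact pair_apply1 _ _
lemma statRk_apply0 (T : BT) : statRk T 0 = T.size := by rw [statRk]; exact pair_apply0 _ _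
lemma statRk_apply1 (T : BT) : statRk T 1 = hookAuxR T := by rw [statRk]; exact pair_apply1 _ _
lemma statO_apply0 (W : PTree) : statO W 0 = W.edges := by rw [statO]; exact pair_apply0 _ _
lemma statO_apply1 (W : PTree) : statO W 1 = W.cl := by rw [statO]; exact pair_apply1 _ _

lemma sing0_app0 (n : ℕ) : (Finsupp.single (0 : Fin 2) n : Ix) 0 = n := Finsupp.single_eq_same
lemma sing0_app1 (n : ℕ) : (Finsupp.single (0 : Fin 2) n : Ix) 1 = 0 :=
  Finsupp.single_eq_of_ne (by decide)
lemma sing1_app0 (n : ℕ) : (Finsupp.single (1 : Fin 2) n : Ix) 0 = 0 :=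
  Finsupp.single_eq_of_ne (by decide)
lemma sing1_app1 (n : ℕ) : (Finsupp.single (1 : Fin 2) n : Ix) 1 = n := Finsupp.single_eq_same

/-! ### Structure equivalences -/

def listSplit : Unit ⊕ (PTree × List PTree) ≃ List PTree where
  toFun x := match x with
    | Sum.inl _ => []
    | Sum.inr (w, l) => w :: l
  invFun l := match l with
    | [] => Sum.inl ()
    | w :: l => Sum.inr (w, l)
  left_inv x := by rcases x with _ | ⟨w, l⟩ <;> rfl
  right_inv l := by rcases l with _ | ⟨w, l⟩ <;> rfl

def btJoin : Unit ⊕ (BT × BT) ≃ BT where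
  toFun x := match x with
    | Sum.inl _ => BT.leaf
    | Sum.inr (l, r) => BT.node l r
  invFun T := match T with
    | BT.leaf => Sum.inl ()
    | BT.node l r => Sum.inr (l, r)
  left_inv x := by rcases x with _ | ⟨l, r⟩ <;> rfl
  right_inv T := by rcases T with _ | ⟨l, r⟩ <;> rfl

def ptJoin : List PTree ≃ PTree where
  toFun := PTree.node
  invFun W := match W with
    | PTree.node ts => ts
  left_inv l := rfl
  right_inv W := by rcases W with ⟨ts⟩; rfl

/-- The "has a leaf child" predicate on lists of plane trees. -/
def leafy (l : List PTree) : Prop := l.any PTree.isLeaf = true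

lemma leafy_cons (w : PTree) (l : List PTree) :
    leafy (w :: l) ↔ w.isLeaf = true ∨ leafy l := by
  simp [leafy]

lemma not_leafy_nil : ¬ leafy [] := by simp [leafy]

def nlSplit : Unit ⊕ ({w : PTree // ¬ w.isLeaf = true} × {l : List PTree // ¬ leafy l}) ≃
    {l : List PTree // ¬ leafy l} where
  toFun x := match x with
    | Sum.inl _ => ⟨[], not_leafy_nil⟩
    | Sum.inr (w, l) => ⟨w.1 :: l.1, by
        rw [leafy_cons]
        rintro (h | h)
        · exact w.2 h
        · exact l.2 h⟩
  invFun l := match l with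
    | ⟨[], _⟩ => Sum.inl ()
    | ⟨w :: rest, h⟩ =>
        Sum.inr (⟨w, fun hw => h ((leafy_cons w rest).mpr (Or.inl hw))⟩,
          ⟨rest, fun hr => h ((leafy_cons w rest).mpr (Or.inr hr))⟩)
  left_inv x := by rcases x with _ | ⟨⟨w, hw⟩, ⟨l, hl⟩⟩ <;> rfl
  right_inv l := by rcases l with ⟨_ | ⟨w, rest⟩, h⟩ <;> rfl

def leafEquiv : Unit ≃ {w : PTree // w.isLeaf = true} where
  toFun _ := ⟨PTree.node [], rfl⟩
  invFun _ := ()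
  left_inv _ := rfl
  right_inv w := by
    rcases w with ⟨⟨ts⟩, h⟩
    have : ts = [] := by
      have : ts.isEmpty = true := h
      exact List.isEmpty_iff.mp this
    subst this
    rfl

/-- Generic splitting of a series along a predicate. -/
lemma ser_split {α : Type} (p : α → Prop) (s : α → Ix) (hs : FinStat s) :
    ser s = ser (fun x : {a // p a} => s x.1) + ser (fun x : {a // ¬ p a} => s x.1) := by
  classical
  rw [← ser_sumElim hs.subtype hs.subtype]
  refine (ser_congr (Equiv.sumCompl p) ?_).symm
  rintro (x | x)
  · simp
  · simp

/-! ### Stat computations -/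

lemma statList_nil : statList [] = 0 := rfl

lemma statList_cons (w : PTree) (l : List PTree) :
    statList (w :: l) = Finsupp.single 0 1 + (statO w + statList l) := by
  apply ix_ext
  · rw [statList_apply0, Finsupp.add_apply, Finsupp.add_apply, sing0_app0, statO_apply0,
      statList_apply0]
    simp only [List.length_cons, List.map_cons, List.sum_cons]
    ring
  · rw [statList_apply1, Finsupp.add_apply, Finsupp.add_apply, sing0_app1, statO_apply1,
      statList_apply1]
    simp only [List.map_cons, List.sum_cons]
    ring

lemma statO_node_not_leafy (ts : List PTree) (h : ¬ leafy ts) :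
    statO (PTree.node ts) = statList ts := by
  apply ix_ext
  · rw [statO_apply0, statList_apply0, PTree.edges_node]
  · rw [statO_apply1, statList_apply1, PTree.cl_node]
    have : ts.any PTree.isLeaf = false := by
      rcases Bool.eq_false_or_eq_true (ts.any PTree.isLeaf) with h1 | h1
      · exact absurd h1 h
      · exact h1
    rw [this]
    simp

lemma statO_node_leafy (ts : List PTree) (h : leafy ts) :
    statO (PTree.node ts) = Finsupp.single 1 1 + statList ts := by
  apply ix_ext
  · rw [statO_apply0, Finsupp.add_apply, sing1_app0, statList_apply0, PTree.edges_node, zero_add]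
  · rw [statO_apply1, Finsupp.add_apply, sing1_app1, statList_apply1, PTree.cl_node]
    rw [h]
    simp

lemma statO_leaf : statO (PTree.node []) = 0 := by
  apply ix_ext
  · rw [statO_apply0, PTree.edges_node]; simp
  · rw [statO_apply1, PTree.cl_node]; simp [PTree.isLeaf]

lemma statB_node (l r : BT) :
    statB (BT.node l r) = Finsupp.single 0 1 + (Finsupp.single 1 1 + (statLk l + statRk r)) := by
  apply ix_ext
  · simp only [Finsupp.add_apply, statB_apply0, statLk_apply0, statRk_apply0, sing0_app0,
      sing1_app0, BT.size]
    ring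
  · simp only [Finsupp.add_apply, statB_apply1, statLk_apply1, statRk_apply1, sing0_app1,
      sing1_app1, hookCount]
    ring

lemma statB_leaf : statB BT.leaf = 0 := by
  apply ix_ext
  · simp [statB_apply0, BT.size]
  · simp [statB_apply1, hookCount]

lemma statLk_node (l r : BT) :
    statLk (BT.node l r) = Finsupp.single 0 1 + (statB r + statLk l) := by
  apply ix_ext
  · simp only [Finsupp.add_apply, statLk_apply0, statB_apply0, sing0_app0, BT.size]
    ring
  · simp only [Finsupp.add_apply, statLk_apply1, statB_apply1, sing0_app1, hookAuxL]
    ring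

lemma statLk_leaf : statLk BT.leaf = 0 := by
  apply ix_ext
  · simp [statLk_apply0, BT.size]
  · simp [statLk_apply1, hookAuxL]

lemma statRk_node (l r : BT) :
    statRk (BT.node l r) = Finsupp.single 0 1 + (statB l + statRk r) := by
  apply ix_ext
  · simp only [Finsupp.add_apply, statRk_apply0, statB_apply0, sing0_app0, BT.size]
    ring
  · simp only [Finsupp.add_apply, statRk_apply1, statB_apply1, sing0_app1, hookAuxR]
    ring

lemma statRk_leaf : statRk BT.leaf = 0 := by
  apply ix_ext
  · simp [statRk_apply0, BT.size]
  · simp [statRk_apply1, hookAuxR]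

/-! ### Auxiliary series -/

noncomputable def Pser : MvPowerSeries (Fin 2) ℚ :=
  ser (fun x : {l : List PTree // leafy l} => statList x.1)
noncomputable def Nser2 : MvPowerSeries (Fin 2) ℚ :=
  ser (fun x : {l : List PTree // ¬ leafy l} => statList x.1)
noncomputable def Qser : MvPowerSeries (Fin 2) ℚ :=
  ser (fun x : {w : PTree // ¬ w.isLeaf = true} => statO x.1)

/-! ### The six combinatorial equations -/

lemma hMsplit : ser statList = Pser + Nser2 :=
  ser_split leafy statList finstatList

lemma finstatONode : FinStat (fun l : List PTree => statO (PTree.node l)) :=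
  FinStat.congr ptJoin (fun _ => rfl) finstatO

lemma hOsplit : ser statO = MvPowerSeries.X 1 * Pser + Nser2 := by
  have e1 : ser (fun l : List PTree => statO (PTree.node l)) = ser statO :=
    ser_congr ptJoin (fun _ => rfl)
  rw [← e1, ser_split leafy _ finstatONode]
  congr 1
  · have : (fun x : {l : List PTree // leafy l} => statO (PTree.node x.1))
        = (fun x : {l : List PTree // leafy l} => Finsupp.single 1 1 + statList x.1) :=
      funext (fun x => statO_node_leafy x.1 x.2)
    rw [this, Pser, ser_X_mul]
  · have : (fun x : {l : List PTree // ¬ leafy l} => statO (PTree.node x.1))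
        = (fun x : {l : List PTree // ¬ leafy l} => statList x.1) :=
      funext (fun x => statO_node_not_leafy x.1 x.2)
    rw [this, Nser2]

lemma hM : ser statList = 1 + MvPowerSeries.X 0 * (ser statO * ser statList) := by
  rw [ser_mul finstatO finstatList, ser_X_mul, ← ser_one]
  exact (ser_congr listSplit (by
    rintro (_ | ⟨w, l⟩)
    · rfl
    · exact statList_cons w l)).symm.trans
    (ser_sumElim (FinStat.const_unit 0) ((finstatO.mul finstatList).addConst (Finsupp.single 0 1)))

lemma hQ : ser statO = 1 + Qser := by
  rw [ser_split (fun w : PTree => w.isLeaf = true) statO finstatO]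
  congr 1
  rw [← ser_one]
  exact ser_congr leafEquiv.symm (fun a => by
    obtain ⟨⟨ts⟩, h⟩ := a
    have : ts = [] := List.isEmpty_iff.mp h
    subst this
    exact statO_leaf.symm)

lemma hN : Nser2 = 1 + MvPowerSeries.X 0 * (Qser * Nser2) := by
  rw [Qser, Nser2, ser_mul finstatO.subtype finstatList.subtype, ser_X_mul, ← ser_one]
  exact (ser_congr nlSplit (by
    rintro (_ | ⟨w, l⟩)
    · rfl
    · exact statList_cons w.1 l.1)).symm.trans
    (ser_sumElim (FinStat.const_unit 0)
      ((finstatO.subtype.mul finstatList.subtype).addConst (Finsupp.single 0 1)))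

lemma hB : ser statB
    = 1 + MvPowerSeries.X 0 * (MvPowerSeries.X 1 * (ser statLk * ser statRk)) := by
  rw [ser_mul finstatLk finstatRk, ser_X_mul, ser_X_mul, ← ser_one]
  exact (ser_congr btJoin (by
    rintro (_ | ⟨l, r⟩)
    · exact statB_leaf
    · exact statB_node l r)).symm.trans
    (ser_sumElim (FinStat.const_unit 0)
      (((finstatLk.mul finstatRk).addConst (Finsupp.single 1 1)).addConst (Finsupp.single 0 1)))

def btJoinL : Unit ⊕ (BT × BT) ≃ BT where
  toFun x := match x with
    | Sum.inl _ => BT.leaf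
    | Sum.inr (r, l) => BT.node l r
  invFun T := match T with
    | BT.leaf => Sum.inl ()
    | BT.node l r => Sum.inr (r, l)
  left_inv x := by rcases x with _ | ⟨r, l⟩ <;> rfl
  right_inv T := by rcases T with _ | ⟨l, r⟩ <;> rfl

lemma hL : ser statLk = 1 + MvPowerSeries.X 0 * (ser statB * ser statLk) := by
  rw [ser_mul finstatB finstatLk, ser_X_mul, ← ser_one]
  exact (ser_congr btJoinL (by
    rintro (_ | ⟨r, l⟩)
    · exact statLk_leaf
    · exact statLk_node l r)).symm.trans
    (ser_sumElim (FinStat.const_unit 0)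
      ((finstatB.mul finstatLk).addConst (Finsupp.single 0 1)))

lemma hR : ser statRk = 1 + MvPowerSeries.X 0 * (ser statB * ser statRk) := by
  rw [ser_mul finstatB finstatRk, ser_X_mul, ← ser_one]
  exact (ser_congr btJoin (by
    rintro (_ | ⟨l, r⟩)
    · exact statRk_leaf
    · exact statRk_node l r)).symm.trans
    (ser_sumElim (FinStat.const_unit 0)
      ((finstatB.mul finstatRk).addConst (Finsupp.single 0 1)))

/-! ### Algebra -/

lemma hMC : ser statList * (1 - MvPowerSeries.X 0 * ser statO) = 1 := by
  linear_combination hM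

lemma hNA : Nser2 * (1 - MvPowerSeries.X 0 * (ser statO - 1)) = 1 := by
  linear_combination hN - MvPowerSeries.X 0 * Nser2 * hQ

lemma hLG : ser statLk * (1 - MvPowerSeries.X 0 * ser statB) = 1 := by
  linear_combination hL

lemma hRG : ser statRk * (1 - MvPowerSeries.X 0 * ser statB) = 1 := by
  linear_combination hR

lemma hO' : ser statO = Nser2 + MvPowerSeries.X 1 * (ser statList - Nser2) := by
  linear_combination hOsplit - MvPowerSeries.X 1 * hMsplit

lemma hconstC : MvPowerSeries.constantCoeff (1 - MvPowerSeries.X 0 * ser statO) ≠ 0 := by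
  simp

lemma hconstA :
    MvPowerSeries.constantCoeff (1 - MvPowerSeries.X 0 * (ser statO - 1)) ≠ 0 := by
  simp

lemma hMN : ser statList - Nser2
    = MvPowerSeries.X 0 * (ser statList * Nser2) := by
  linear_combination Nser2 * hMC - ser statList * hNA

/-- The generating series of rooted plane trees counted by edges
(`x`) and by the number of vertices having a child which is a leaf (`t`) satisfies
`O = (1/(1 - x(O-1))) (1 + x t (1/(1 - x O)))`, and moreover `O = B`, the generating
series of binary trees counted by vertices and hook number. -/
theorem stmt18 :
    Oser = ((1 - MvPowerSeries.X 0 * (Oser - 1))⁻¹) *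
        (1 + MvPowerSeries.X 0 * MvPowerSeries.X 1 * ((1 - MvPowerSeries.X 0 * Oser)⁻¹)) ∧
    Oser = Bser := by
  have hMC1 : (1 - MvPowerSeries.X 0 * ser statO)⁻¹ = ser statList :=
    (MvPowerSeries.inv_eq_iff_mul_eq_one hconstC).mpr hMC
  have hNA1 : (1 - MvPowerSeries.X 0 * (ser statO - 1))⁻¹ = Nser2 :=
    (MvPowerSeries.inv_eq_iff_mul_eq_one hconstA).mpr hNA
  constructor
  · rw [Oser_eq, hMC1, hNA1]
    linear_combination hO' + MvPowerSeries.X 1 * hMN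
  · rw [Oser_eq, Bser_eq]
    have h3 : ser statO * (1 - MvPowerSeries.X 0 * ser statO) * (1 - MvPowerSeries.X 0 * ser statO)
        = (1 - MvPowerSeries.X 0 * ser statO) * (1 - MvPowerSeries.X 0 * ser statO)
          + MvPowerSeries.X 0 * MvPowerSeries.X 1 := by
      linear_combination (1 - MvPowerSeries.X 0 * (ser statO - 1)) *
          ((1 - MvPowerSeries.X 0 * ser statO) * hO' + MvPowerSeries.X 1 * hMC)
        + (1 - MvPowerSeries.X 1) * (1 - MvPowerSeries.X 0 * ser statO) * hNA
    have h4 : ser statB * (1 - MvPowerSeries.X 0 * ser statB) * (1 - MvPowerSeries.X 0 * ser statB)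
        = (1 - MvPowerSeries.X 0 * ser statB) * (1 - MvPowerSeries.X 0 * ser statB)
          + MvPowerSeries.X 0 * MvPowerSeries.X 1 := by
      linear_combination (1 - MvPowerSeries.X 0 * ser statB) * (1 - MvPowerSeries.X 0 * ser statB) * hB
        + MvPowerSeries.X 0 * MvPowerSeries.X 1 * ser statRk * (1 - MvPowerSeries.X 0 * ser statB) * hLG
        + MvPowerSeries.X 0 * MvPowerSeries.X 1 * hRG
    set C := 1 - MvPowerSeries.X 0 * ser statO with hC
    set G := 1 - MvPowerSeries.X 0 * ser statB with hG
    have h5 : (C * C + MvPowerSeries.X 0 * (1 - ser statB) * (C + G)) * (ser statO - ser statB)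
        = 0 := by
      rw [hC, hG]
      linear_combination h3 - h4
    have hu : C * C + MvPowerSeries.X 0 * (1 - ser statB) * (C + G) ≠ 0 := by
      intro h
      have := congrArg MvPowerSeries.constantCoeff h
      rw [hC, hG] at this
      simp at this
    rcases mul_eq_zero.mp h5 with h | h
    · exact absurd h hu
    · exact sub_eq_zero.mp h
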